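/- Let S and O be nonempty finite sets with |S| ≥ 2, let ε ≥ 0, and let C be a channel from S to O that is ε-LDP, i.e., C s o ≤ exp(ε) · C s' o for all s, s' ∈ S and o ∈ O. Then for every prior π on S with G(π) > 0, one has β(π, C) ≥ 2 / (1 + exp(ε)). -/
import Mathlib


/-- A channel from secrets `S` to outputs `O`: nonnegative entries, rows sum to 1. -/
def IsChannel {S O : Type*} [Fintype O] (C : S → O → ℝ) : Prop :=
  (∀ s o, 0 ≤ C s o) ∧ ∀ s, ∑ o, C s o = 1

/-- A prior on `S`: nonnegative, sums to 1. -/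
def IsPrior {S : Type*} [Fintype S] (π : S → ℝ) : Prop :=
  (∀ s, 0 ≤ π s) ∧ ∑ s, π s = 1

/-- Bayes risk `R*(π, C) = 1 − ∑_o max_s (π s · C s o)`. -/
noncomputable def bayesRisk {S O : Type*} [Fintype S] [Nonempty S] [Fintype O]
    (π : S → ℝ) (C : S → O → ℝ) : ℝ :=
  1 - ∑ o, Finset.univ.sup' Finset.univ_nonempty (fun s => π s * C s o)

/-- Guessing error `G(π) = 1 − max_s π s`. -/
noncomputable def guessErr {S : Type*} [Fintype S] [Nonempty S] (π : S → ℝ) : ℝ :=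
  1 - Finset.univ.sup' Finset.univ_nonempty π

/-- Multiplicative Bayes risk leakage `β(π, C) = R*(π, C) / G(π)`. -/
noncomputable def betaL {S O : Type*} [Fintype S] [Nonempty S] [Fintype O]
    (π : S → ℝ) (C : S → O → ℝ) : ℝ :=
  bayesRisk π C / guessErr π

/-- The prior `π_{ab}` assigning 1/2 to each of `a` and `b` and 0 elsewhere. -/
noncomputable def pairPrior {S : Type*} [DecidableEq S] (a b : S) : S → ℝ :=
  fun s => if s = a ∨ s = b then 1 / 2 else 0

/-- Bayes security `β*(C)`: the minimum of `β(π_{ab}, C)` over distinct pairs `a ≠ b`. -/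
noncomputable def betaStar {S O : Type*} [Fintype S] [Nonempty S] [DecidableEq S] [Fintype O]
    (C : S → O → ℝ) (h : 1 < Fintype.card S) : ℝ :=
  (Finset.univ.filter (fun p : S × S => p.1 ≠ p.2)).inf'
    (by
      obtain ⟨a, b, hab⟩ := Fintype.exists_pair_of_one_lt_card h
      exact ⟨(a, b), by simp [hab]⟩)
    (fun p => betaL (pairPrior p.1 p.2) C)

/-- A channel is `ε`-LDP if `C s o ≤ exp(ε) · C s' o` for all secrets `s, s'` and outputs `o`. -/
def IsLDP {S O : Type*} (ε : ℝ) (C : S → O → ℝ) : Prop :=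
  ∀ s s' o, C s o ≤ Real.exp ε * C s' o

/-- if `C` is `ε`-LDP then `β(π, C) ≥ 2 / (1 + exp ε)` for every prior `π`
with positive guessing error. -/
theorem ldp_lower_bound_beta {S O : Type*} [Fintype S] [Nonempty S] [Fintype O] [Nonempty O]
    (hS : 1 < Fintype.card S) (ε : ℝ) (hε : 0 ≤ ε)
    (C : S → O → ℝ) (hC : IsChannel C) (hLDP : IsLDP ε C)
    (π : S → ℝ) (hπ : IsPrior π) (hG : 0 < guessErr π) :
    2 / (1 + Real.exp ε) ≤ betaL π C := by
  classical
  obtain ⟨hCpos, hCsum⟩ := hC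
  obtain ⟨hπpos, hπsum⟩ := hπ
  set e := Real.exp ε with he
  have he1 : 1 ≤ e := Real.one_le_exp hε
  have hep : (0:ℝ) < 1 + e := by linarith
  unfold guessErr at hG
  unfold betaL bayesRisk guessErr
  set M := Finset.univ.sup' Finset.univ_nonempty π with hM
  have hMle : ∀ s, π s ≤ M := fun s => Finset.le_sup' π (Finset.mem_univ s)
  have hM1 : M < 1 := by linarith
  have hM0 : 0 ≤ M := le_trans (hπpos (Classical.arbitrary S)) (hMle _)
  set F := ∑ o, Finset.univ.sup' Finset.univ_nonempty (fun s => π s * C s o) with hF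
  have hsumT : ∑ o, ∑ s, π s * C s o = 1 := by
    rw [Finset.sum_comm]
    have : ∀ s, ∑ o, π s * C s o = π s := by
      intro s; rw [← Finset.mul_sum, hCsum s, mul_one]
    rw [Finset.sum_congr rfl (fun s _ => this s), hπsum]
  have key : (1 + e) * F ≤ e - 1 + 2 * M := by
    rcases le_or_gt M (1/2) with h2 | h2
    · -- case M ≤ 1/2 : pointwise bound
      have hD : (0:ℝ) < 1 + M * (e - 1) := by nlinarith
      have hF1 : (1 + M * (e - 1)) * F ≤ M * e := by
        have hpt : ∀ o : O, (1 + M * (e - 1)) *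
            (Finset.univ.sup' Finset.univ_nonempty (fun s => π s * C s o))
            ≤ M * e * ∑ s, π s * C s o := by
          intro o
          rw [mul_comm, ← le_div_iff₀ hD]
          apply Finset.sup'_le
          intro t _
          rw [le_div_iff₀ hD]
          have hsum_erase : ∑ s ∈ Finset.univ.erase t, π s = 1 - π t := by
            have h := Finset.sum_erase_add Finset.univ π (Finset.mem_univ t)
            rw [hπsum] at h; linarith
          have h1 : (1 - π t) * C t o = ∑ s ∈ Finset.univ.erase t, π s * C t o := by
            rw [← hsum_erase, Finset.sum_mul]
          have h2 : ∑ s ∈ Finset.univ.erase t, π s * C t o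
              ≤ ∑ s ∈ Finset.univ.erase t, e * (π s * C s o) := by
            apply Finset.sum_le_sum
            intro s _
            have hl := hLDP t s o
            nlinarith [hπpos s]
          have h3 : e * (π t * C t o) + ∑ s ∈ Finset.univ.erase t, e * (π s * C s o)
              = e * ∑ s, π s * C s o := by
            rw [← Finset.mul_sum, ← mul_add, Finset.add_sum_erase Finset.univ
              (fun s => π s * C s o) (Finset.mem_univ t)]
          have hT : e * (π t * C t o) + (1 - π t) * C t o ≤ e * ∑ s, π s * C s o := by
            rw [h1]; linarith
          nlinarith [hCpos t o, hπpos t, hMle t, mul_nonneg (sub_nonneg.2 (hMle t)) (hCpos t o)]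
        calc (1 + M * (e - 1)) * F
            = ∑ o, (1 + M * (e - 1)) *
              (Finset.univ.sup' Finset.univ_nonempty (fun s => π s * C s o)) := by
              rw [hF, Finset.mul_sum]
          _ ≤ ∑ o, M * e * ∑ s, π s * C s o := Finset.sum_le_sum (fun o _ => hpt o)
          _ = M * e := by rw [← Finset.mul_sum, hsumT, mul_one]
      have hF0 : 0 ≤ F := by
        apply Finset.sum_nonneg
        intro o _
        have s0 := Classical.arbitrary S
        exact le_trans (mul_nonneg (hπpos s0) (hCpos s0 o))
          (Finset.le_sup' (fun s => π s * C s o) (Finset.mem_univ s0))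
      nlinarith [mul_le_mul_of_nonneg_left hF1 hep.le,
        mul_nonneg (mul_nonneg (sub_nonneg.2 he1) (by linarith : (0:ℝ) ≤ 1 - M))
          (by linarith : (0:ℝ) ≤ 1 - 2 * M)]
    · -- case M > 1/2 : decompose into pair priors
      obtain ⟨a, _, ha⟩ := Finset.exists_mem_eq_sup' (Finset.univ_nonempty (α := S)) π
      have haM : π a = M := ha.symm
      have hsum_erase : ∑ s ∈ Finset.univ.erase a, π s = 1 - M := by
        have h := Finset.sum_erase_add Finset.univ π (Finset.mem_univ a)
        rw [hπsum] at h; linarith [haM ▸ h]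
      have hpair : ∀ s : S, (1 + e) * (∑ o, max (C a o) (C s o)) ≤ 2 * e := by
        intro s
        have hptw : ∀ o : O, (1 + e) * max (C a o) (C s o) ≤ e * (C a o + C s o) := by
          intro o
          rcases max_cases (C a o) (C s o) with ⟨h, _⟩ | ⟨h, _⟩ <;> rw [h] <;>
            nlinarith [hLDP a s o, hLDP s a o, hCpos a o, hCpos s o]
        calc (1 + e) * ∑ o, max (C a o) (C s o)
            = ∑ o, (1 + e) * max (C a o) (C s o) := by rw [Finset.mul_sum]
          _ ≤ ∑ o, e * (C a o + C s o) := Finset.sum_le_sum (fun o _ => hptw o)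
          _ = 2 * e := by
              rw [← Finset.mul_sum, Finset.sum_add_distrib, hCsum a, hCsum s]; ring
      have hpt : ∀ o : O, Finset.univ.sup' Finset.univ_nonempty (fun s => π s * C s o)
          ≤ (2 * M - 1) * C a o + ∑ s ∈ Finset.univ.erase a, π s * max (C a o) (C s o) := by
        intro o
        apply Finset.sup'_le
        intro t _
        rcases eq_or_ne t a with rfl | ht
        · have hb : (1 - M) * C t o ≤ ∑ s ∈ Finset.univ.erase t, π s * max (C t o) (C s o) := by
            rw [← hsum_erase, Finset.sum_mul]
            apply Finset.sum_le_sum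
            intro s _
            exact mul_le_mul_of_nonneg_left (le_max_left _ _) (hπpos s)
          have hexp : (2 * M - 1) * C t o + (1 - M) * C t o = M * C t o := by ring
          rw [haM]
          linarith
        · have hmem : t ∈ Finset.univ.erase a := Finset.mem_erase.2 ⟨ht, Finset.mem_univ t⟩
          have h1 : π t * C t o ≤ π t * max (C a o) (C t o) :=
            mul_le_mul_of_nonneg_left (le_max_right _ _) (hπpos t)
          have h2 : π t * max (C a o) (C t o)
              ≤ ∑ s ∈ Finset.univ.erase a, π s * max (C a o) (C s o) :=
            Finset.single_le_sum (f := fun s => π s * max (C a o) (C s o))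
              (fun s _ => mul_nonneg (hπpos s) (le_trans (hCpos a o) (le_max_left _ _))) hmem
          have h3 : (0:ℝ) ≤ (2 * M - 1) * C a o :=
            mul_nonneg (by linarith) (hCpos a o)
          linarith
      have hFB : F ≤ (2 * M - 1) +
          ∑ s ∈ Finset.univ.erase a, π s * (∑ o, max (C a o) (C s o)) := by
        calc F ≤ ∑ o, ((2 * M - 1) * C a o +
              ∑ s ∈ Finset.univ.erase a, π s * max (C a o) (C s o)) :=
              Finset.sum_le_sum (fun o _ => hpt o)
          _ = (2 * M - 1) * ∑ o, C a o +
              ∑ s ∈ Finset.univ.erase a, π s * (∑ o, max (C a o) (C s o)) := by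
              rw [Finset.sum_add_distrib, ← Finset.mul_sum, Finset.sum_comm]
              congr 1
              exact Finset.sum_congr rfl (fun s _ => (Finset.mul_sum _ _ _).symm)
          _ = (2 * M - 1) +
              ∑ s ∈ Finset.univ.erase a, π s * (∑ o, max (C a o) (C s o)) := by
              rw [hCsum a, mul_one]
      have hSB : (1 + e) * ∑ s ∈ Finset.univ.erase a, π s * (∑ o, max (C a o) (C s o))
          ≤ (1 - M) * (2 * e) := by
        calc (1 + e) * ∑ s ∈ Finset.univ.erase a, π s * (∑ o, max (C a o) (C s o))
            = ∑ s ∈ Finset.univ.erase a, π s * ((1 + e) * ∑ o, max (C a o) (C s o)) := by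
              rw [Finset.mul_sum]; exact Finset.sum_congr rfl (fun s _ => by ring)
          _ ≤ ∑ s ∈ Finset.univ.erase a, π s * (2 * e) := by
              apply Finset.sum_le_sum
              intro s _
              exact mul_le_mul_of_nonneg_left (hpair s) (hπpos s)
          _ = (1 - M) * (2 * e) := by rw [← Finset.sum_mul, hsum_erase]
      nlinarith [mul_le_mul_of_nonneg_left hFB hep.le]
  have hG' : (0:ℝ) < 1 - M := by linarith
  rw [div_le_div_iff₀ hep hG']
  have hexp : (1 - F) * (1 + e) = (1 + e) - (1 + e) * F := by ring
  linarith
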